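/- arXiv:1911.13195 — 2 statements merged into one kernel-verified Lean document; each statement's English description precedes it below -/
import Mathlib

section
/- Let G be a finite group and H ≤ G a subgroup. If every group homomorphism H → ℂˣ extends to a group homomorphism G → ℂˣ, then G' ∩ H = H', where G' and H' are the commutator subgroups of G and H respectively. -/
theorem commutator_inf_eq_of_linear_characters_extend
    {G : Type*} [Group G] [Finite G] (H : Subgroup G)
    (hext : ∀ lam : H →* ℂˣ, ∃ χ : G →* ℂˣ, ∀ h : H, χ h = lam h) :
    commutator G ⊓ H = Subgroup.map H.subtype (commutator H) := by
  apply le_antisymm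
  · rintro x ⟨hxG, hxH⟩
    rw [Subgroup.mem_map]
    by_contra hco
    push_neg at hco
    have hy : (⟨x, hxH⟩ : H) ∉ commutator H := fun h => hco ⟨x, hxH⟩ h rfl
    have hne : (Abelianization.of (⟨x, hxH⟩ : H)) ≠ 1 := by
      intro h
      exact hy ((QuotientGroup.eq_one_iff _).mp h)
    obtain ⟨φ, hφ⟩ := CommGroup.exists_apply_ne_one_of_hasEnoughRootsOfUnity
      (Abelianization H) ℂ hne
    obtain ⟨χ, hχ⟩ := hext (φ.comp Abelianization.of)
    have h1 : χ x = 1 := Abelianization.commutator_subset_ker χ hxG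
    have h2 : χ x = φ (Abelianization.of ⟨x, hxH⟩) := hχ ⟨x, hxH⟩
    exact hφ (h2 ▸ h1).symm.symm
  · rw [Subgroup.map_le_iff_le_comap]
    intro y hy
    simp only [Subgroup.mem_comap, Subgroup.mem_inf]
    refine ⟨?_, y.2⟩
    have : Subgroup.map H.subtype (commutator H) ≤ commutator G := by
      rw [commutator, commutator, Subgroup.map_commutator]
      exact Subgroup.commutator_mono le_top le_top
    exact this ⟨y, hy, rfl⟩
end

section
/- Let G be a finite group, π a set of primes, H a Hall π-subgroup of G and K a Hall π'-subgroup of G. If G' ∩ H = H' (commutator subgroups), then every group homomorphism H → ℂˣ extends to a group homomorphism G → ℂˣ. -/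
open Complex in
noncomputable instance : RootableBy ℂˣ ℕ :=
  rootableByOfPowLeftSurj _ _ (fun {n} hn z => by
    refine ⟨Units.mk0 (Complex.exp (Complex.log z / n)) (Complex.exp_ne_zero _), ?_⟩
    ext
    rw [Units.val_pow_eq_pow_val, Units.val_mk0, ← Complex.exp_nat_mul,
      mul_div_cancel₀ _ (by exact_mod_cast hn : (n : ℂ) ≠ 0), Complex.exp_log z.ne_zero])

noncomputable instance : RootableBy ℂˣ ℤ := Group.rootableByIntOfRootableByNat _

noncomputable instance : DivisibleBy (Additive ℂˣ) ℤ where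
  div a n := Additive.ofMul (RootableBy.root a.toMul n)
  div_zero a := congrArg Additive.ofMul (RootableBy.root_zero a.toMul)
  div_cancel a hn := by
    show _ • Additive.ofMul (RootableBy.root a.toMul _) = a
    rw [← ofMul_zpow]
    exact congrArg Additive.ofMul (RootableBy.root_cancel _ hn)

/-- `H` is a Hall `π`-subgroup: `|H|` is a `π`-number and `[G:H]` is a `π'`-number. -/
def IsHallSubgroup {G : Type*} [Group G] (π : Set ℕ) (H : Subgroup G) : Prop :=
  (∀ p : ℕ, p.Prime → p ∣ Nat.card H → p ∈ π) ∧
  (∀ p : ℕ, p.Prime → p ∣ H.index → p ∉ π)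

theorem linear_characters_extend_of_commutator_inf
    {G : Type*} [Group G] [Finite G] (π : Set ℕ) (H K : Subgroup G)
    (hH : IsHallSubgroup π H) (hK : IsHallSubgroup πᶜ K)
    (hcomm : commutator G ⊓ H = Subgroup.map H.subtype (commutator H)) :
    ∀ lam : H →* ℂˣ, ∃ χ : G →* ℂˣ, ∀ h : H, χ h = lam h := by
  intro lam
  -- `f : H →* Abelianization G`
  set f : H →* Abelianization G := (Abelianization.of).comp H.subtype with hf
  -- kernel of `f` is contained in kernel of `lam`
  have hker : f.ker ≤ lam.ker := by
    intro x hx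
    have hx1 : Abelianization.of (x : G) = 1 := hx
    have hxc : (x : G) ∈ commutator G := (QuotientGroup.eq_one_iff _).mp hx1
    have hmem : (x : G) ∈ commutator G ⊓ H := ⟨hxc, x.2⟩
    rw [hcomm] at hmem
    obtain ⟨y, hy, hyx⟩ := hmem
    have : y = x := Subtype.ext hyx
    subst this
    exact Abelianization.commutator_subset_ker lam hy
  -- `lam` factors through the range of `f`
  set lam' : f.range →* ℂˣ :=
    (QuotientGroup.lift f.ker lam hker).comp
      (QuotientGroup.quotientKerEquivRange f).symm.toMonoidHom with hlam'
  have hlam'_app : ∀ h : H, lam' (f.rangeRestrict h) = lam h := by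
    intro h
    have h1 : (QuotientGroup.quotientKerEquivRange f) (QuotientGroup.mk h) =
        f.rangeRestrict h := rfl
    have h2 : (QuotientGroup.quotientKerEquivRange f).symm (f.rangeRestrict h) =
        QuotientGroup.mk h := by
      rw [← h1, MulEquiv.symm_apply_apply]
    simp only [hlam', MonoidHom.comp_apply, MulEquiv.coe_toMonoidHom, h2]
    rfl
  -- extend `lam'` along the inclusion of the range into the abelianization
  have hinj : Function.Injective (⇑(MonoidHom.toAdditive ((f.range).subtype))) :=
    fun a b h => by exact Subgroup.subtype_injective f.range h
  obtain ⟨E, hE⟩ := (Module.Baer.of_divisible (Additive ℂˣ)).extension_property_addMonoidHom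
    (MonoidHom.toAdditive ((f.range).subtype)) hinj (MonoidHom.toAdditive lam')
  refine ⟨(MonoidHom.toAdditive.symm E).comp Abelianization.of, fun h => ?_⟩
  have key : E (Additive.ofMul ((f.range).subtype (f.rangeRestrict h))) =
      Additive.ofMul (lam' (f.rangeRestrict h)) :=
    DFunLike.congr_fun hE (Additive.ofMul (f.rangeRestrict h))
  have hof : (f.range).subtype (f.rangeRestrict h) = Abelianization.of (h : G) := rfl
  calc (MonoidHom.toAdditive.symm E) (Abelianization.of (h : G))
      = Additive.toMul (E (Additive.ofMul (Abelianization.of (h : G)))) := rfl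
    _ = lam h := by rw [← hof, key, hlam'_app]; rfl
end
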